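/- Let X ⊆ ℝ be compact, T a map of X, m a Borel probability measure on X and μ a T-invariant Borel probability measure satisfying the exponential decay of correlations |∫ φ∘Tⁿ · ψ dμ − ∫φ dμ ∫ψ dμ| ≤ C ‖φ‖_{L¹(m)} ‖ψ‖_BV θⁿ for all n ≥ 1, φ ∈ L¹(m), ψ of bounded variation, with constants C > 0, θ ∈ (0,1). Then for every X-interval U with μ(U) > 0 and every N ≥ 1: a_N(U) := μ_U({x ∈ U : τ_U(x) ≤ N}) ≤ (3C/(1−θ)) · (m(U)/μ(U)) · θ^{τ(U)} + N μ(U), where τ(U) = inf{τ_U(x) : x ∈ U}. -/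

import Mathlib

open scoped ENNReal
open MeasureTheory Filter Metric Set ProbabilityTheory Topology

lemma evar_indicator_le (U X : Set ℝ)
    (hconv : ∀ x y z : ℝ, x ∈ X → y ∈ X → z ∈ X → x ≤ y → y ≤ z → x ∈ U → z ∈ U → y ∈ U) :
    eVariationOn (U.indicator (fun _ => (1:ℝ))) X ≤ 2 := by
  classical
  rw [eVariationOn]
  apply iSup_le
  rintro ⟨n, u, hu, us⟩
  dsimp only
  set f := U.indicator (fun _ => (1:ℝ)) with hf
  have hbd : ∀ x y : ℝ, edist (f x) (f y) ≤ 1 := by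
    intro x y
    rw [edist_dist, Real.dist_eq]
    refine ENNReal.ofReal_le_one.2 ?_
    have hv : ∀ z, f z = 0 ∨ f z = 1 := fun z => by
      by_cases h : z ∈ U <;> simp [hf, h]
    rcases hv x with h|h <;> rcases hv y with h'|h' <;> rw [h, h'] <;> norm_num
  by_cases hex : ∃ i ≤ n, u i ∈ U
  · set a := Nat.find hex with ha
    set b := Nat.findGreatest (fun i => u i ∈ U) n with hb
    have hPa : a ≤ n ∧ u a ∈ U := Nat.find_spec hex
    have hPb : u b ∈ U := by
      obtain ⟨i, hi, hiU⟩ := hex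
      exact Nat.findGreatest_spec (P := fun i => u i ∈ U) hi hiU
    have key : ∀ i ≤ n, (u i ∈ U ↔ a ≤ i ∧ i ≤ b) := by
      intro i hi
      constructor
      · intro hiU
        exact ⟨Nat.find_min' hex ⟨hi, hiU⟩, Nat.le_findGreatest hi hiU⟩
      · rintro ⟨hai, hib⟩
        exact hconv (u a) (u i) (u b) (us a) (us i) (us b) (hu hai) (hu hib) hPa.2 hPb
    have hterm : ∀ i ∈ Finset.range n,
        edist (f (u (i+1))) (f (u i))
          ≤ (if i + 1 = a then (1:ℝ≥0∞) else 0) + (if i = b then 1 else 0) := by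
      intro i hi
      have hin : i < n := Finset.mem_range.1 hi
      by_cases h1 : u i ∈ U <;> by_cases h2 : u (i+1) ∈ U
      · have : f (u (i+1)) = f (u i) := by simp [hf, indicator_of_mem, h1, h2]
        rw [this, edist_self]; positivity
      · have hiU := (key i hin.le).1 h1
        have hnot : ¬ (a ≤ i+1 ∧ i+1 ≤ b) := fun h => h2 ((key (i+1) hin).2 h)
        have hib : i = b := by omega
        calc edist (f (u (i+1))) (f (u i)) ≤ 1 := hbd _ _
          _ ≤ _ := by simp [hib]
      · have hiU := (key (i+1) hin).1 h2
        have hnot : ¬ (a ≤ i ∧ i ≤ b) := fun h => h1 ((key i hin.le).2 h)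
        have hia : i + 1 = a := by omega
        calc edist (f (u (i+1))) (f (u i)) ≤ 1 := hbd _ _
          _ ≤ _ := by simp [hia]
      · have : f (u (i+1)) = f (u i) := by simp [hf, indicator_of_notMem, h1, h2]
        rw [this, edist_self]; positivity
    calc ∑ i ∈ Finset.range n, edist (f (u (i+1))) (f (u i))
        ≤ ∑ i ∈ Finset.range n, ((if i + 1 = a then (1:ℝ≥0∞) else 0) + (if i = b then 1 else 0)) :=
          Finset.sum_le_sum hterm
      _ = (∑ i ∈ Finset.range n, if i + 1 = a then (1:ℝ≥0∞) else 0)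
          + (∑ i ∈ Finset.range n, if i = b then (1:ℝ≥0∞) else 0) := Finset.sum_add_distrib
      _ ≤ 1 + 1 := by
          gcongr
          · calc (∑ i ∈ Finset.range n, if i + 1 = a then (1:ℝ≥0∞) else 0)
                ≤ ∑ i ∈ Finset.range n, if i = a - 1 then (1:ℝ≥0∞) else 0 := by
                  apply Finset.sum_le_sum
                  intro i _
                  split <;> rename_i h
                  · simp [show i = a - 1 by omega]
                  · positivity
              _ ≤ 1 := by rw [Finset.sum_ite_eq' (Finset.range n) (a-1)]; split <;> simp
          · rw [Finset.sum_ite_eq' (Finset.range n) b]; split <;> simp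
      _ = 2 := by norm_num
  · push_neg at hex
    have : ∀ i ∈ Finset.range n, edist (f (u (i+1))) (f (u i)) = 0 := by
      intro i hi
      have hin : i < n := Finset.mem_range.1 hi
      rw [hf, indicator_of_notMem (hex _ hin.le), indicator_of_notMem (hex _ hin)]
      exact edist_self 0
    rw [Finset.sum_congr rfl this]
    simp


/-- The minimal return time `τ(U) = inf {τ_U(x) : x ∈ U}` of a set `U` under `T`
(junk value `0` if no point of `U` ever returns). -/
noncomputable def minRet {X : Type*} (T : X → X) (U : Set X) : ℕ :=
  sInf {n | 0 < n ∧ ∃ x ∈ U, T^[n] x ∈ U}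

/-- If `(T, μ)` has exponential decay of correlations against `L¹(m)`
and bounded-variation observables, with constants `C > 0`, `θ ∈ (0,1)`, then for every
`X`-interval `U` of positive measure and every `N ≥ 1`,
`a_N(U) = μ_U(τ_U ≤ N) ≤ (3C/(1−θ)) (m(U)/μ(U)) θ^{τ(U)} + N μ(U)`. -/
theorem stmt9 (X : Set ℝ) (hX : IsCompact X) (T : ℝ → ℝ)
    (m μ : Measure ℝ) [IsProbabilityMeasure m] [IsProbabilityMeasure μ]
    (hmX : m X = 1) (hμX : μ X = 1) (hinv : MeasurePreserving T μ μ)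
    (C θ : ℝ) (hC : 0 < C) (hθ : θ ∈ Ioo (0:ℝ) 1)
    (hdec : ∀ n : ℕ, 1 ≤ n → ∀ φ ψ : ℝ → ℝ, Integrable φ m → eVariationOn ψ X ≠ ⊤ →
      |(∫ x, φ (T^[n] x) * ψ x ∂μ) - (∫ x, φ x ∂μ) * ∫ x, ψ x ∂μ|
        ≤ C * (∫ x, |φ x| ∂m) * ((⨆ x ∈ X, |ψ x|) + (eVariationOn ψ X).toReal) * θ ^ n)
    (U : Set ℝ) (hU : ∃ J : Set ℝ, J.OrdConnected ∧ U = X ∩ J)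
    (hUmeas : MeasurableSet U) (hUpos : 0 < μ U) (N : ℕ) (hN : 1 ≤ N) :
    (μ[|U] {x | ∃ n : ℕ, 1 ≤ n ∧ n ≤ N ∧ T^[n] x ∈ U}).toReal
      ≤ 3 * C / (1 - θ) * ((m U).toReal / (μ U).toReal) * θ ^ minRet T U
        + N * (μ U).toReal := by
  classical
  obtain ⟨J, hJ, hUJ⟩ := hU
  obtain ⟨hθ0, hθ1⟩ := hθ
  set ψ : ℝ → ℝ := U.indicator (fun _ => (1:ℝ)) with hψ
  set pU := (μ U).toReal with hpU
  set mU := (m U).toReal with hmU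
  set r := minRet T U with hr
  have hpU0 : 0 < pU := ENNReal.toReal_pos hUpos.ne' (measure_ne_top μ U)
  have hmU0 : 0 ≤ mU := ENNReal.toReal_nonneg
  -- variation bound
  have hvar : eVariationOn ψ X ≤ 2 := by
    apply evar_indicator_le
    intro x y z hx hy hz hxy hyz hxU hzU
    rw [hUJ] at hxU hzU ⊢
    exact ⟨hy, hJ.out hxU.2 hzU.2 ⟨hxy, hyz⟩⟩
  have hvar_ne : eVariationOn ψ X ≠ ⊤ := fun h => by simp [h] at hvar
  have hvar_le : (eVariationOn ψ X).toReal ≤ 2 := by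
    rw [show (2:ℝ) = (2:ℝ≥0∞).toReal by simp]
    exact ENNReal.toReal_mono (by simp) hvar
  have hψ01 : ∀ x, ψ x = 0 ∨ ψ x = 1 := fun x => by
    by_cases h : x ∈ U <;> simp [hψ, h]
  have hsup : (⨆ x ∈ X, |ψ x|) ≤ 1 := by
    refine Real.iSup_le (fun x => Real.iSup_le (fun _ => ?_) one_pos.le) one_pos.le
    rcases hψ01 x with h|h <;> rw [h] <;> norm_num
  have hψnonneg : ∀ x, 0 ≤ ψ x := fun x =>
    Set.indicator_nonneg (fun _ _ => zero_le_one) x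
  have hint : Integrable ψ m := (integrable_const (1:ℝ)).indicator hUmeas
  have habs : (∫ x, |ψ x| ∂m) = mU := by
    have : (fun x => |ψ x|) = ψ := funext fun x => abs_of_nonneg (hψnonneg x)
    rw [this, hψ, integral_indicator_const (1:ℝ) hUmeas, smul_eq_mul, mul_one]
    rfl
  have hμψ : (∫ x, ψ x ∂μ) = pU := by
    rw [hψ, integral_indicator_const (1:ℝ) hUmeas, smul_eq_mul, mul_one]
    rfl
  have hTmeas : ∀ n : ℕ, MeasurableSet (T^[n] ⁻¹' U) := fun n =>
    (hinv.measurable.iterate n) hUmeas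
  -- the sets A n
  set A : ℕ → Set ℝ := fun n => U ∩ T^[n] ⁻¹' U with hA
  have hprod : ∀ n : ℕ, (∫ x, ψ (T^[n] x) * ψ x ∂μ) = (μ (A n)).toReal := by
    intro n
    have heq : (fun x => ψ (T^[n] x) * ψ x)
        = (A n).indicator (fun _ => (1:ℝ)) := by
      funext x
      by_cases h1 : x ∈ U <;> by_cases h2 : T^[n] x ∈ U <;>
        simp [hψ, hA, indicator_apply, h1, h2]
    rw [heq, integral_indicator_const (1:ℝ) (hUmeas.inter (hTmeas n)), smul_eq_mul, mul_one]
    rfl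
  -- decay bound on A n
  have hAle : ∀ n : ℕ, 1 ≤ n → (μ (A n)).toReal ≤ pU ^ 2 + 3 * C * mU * θ ^ n := by
    intro n hn
    have h := hdec n hn ψ ψ hint hvar_ne
    rw [hprod n, habs, hμψ] at h
    have h3 : C * mU * ((⨆ x ∈ X, |ψ x|) + (eVariationOn ψ X).toReal) * θ ^ n
        ≤ C * mU * 3 * θ ^ n := by
      have hs3 : (⨆ x ∈ X, |ψ x|) + (eVariationOn ψ X).toReal ≤ 3 := by linarith
      exact mul_le_mul_of_nonneg_right
        (mul_le_mul_of_nonneg_left hs3 (mul_nonneg hC.le hmU0)) (pow_nonneg hθ0.le n)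
    have habs' := (abs_le.1 h).2
    nlinarith [pow_pos hθ0 n]
  -- A n is empty below the minimal return time
  have hAzero : ∀ n : ℕ, 0 < n → n < r → μ (A n) = 0 := by
    intro n hn hnr
    have : A n = ∅ := by
      by_contra h
      obtain ⟨x, hxU, hxT⟩ := Set.nonempty_iff_ne_empty.2 h
      have : r ≤ n := Nat.sInf_le ⟨hn, x, hxU, hxT⟩
      omega
    rw [this, measure_empty]
  -- main chain
  set S : Set ℝ := {x | ∃ n : ℕ, 1 ≤ n ∧ n ≤ N ∧ T^[n] x ∈ U} with hS
  have hsub : U ∩ S ⊆ ⋃ n ∈ Finset.Icc 1 N, A n := by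
    rintro x ⟨hxU, n, h1, h2, hT⟩
    exact Set.mem_biUnion (Finset.mem_Icc.2 ⟨h1, h2⟩) ⟨hxU, hT⟩
  have hmeasle : μ (U ∩ S) ≤ ∑ n ∈ Finset.Icc 1 N, μ (A n) :=
    (measure_mono hsub).trans (measure_biUnion_finset_le _ _)
  have hsum_ne : (∑ n ∈ Finset.Icc 1 N, μ (A n)) ≠ ⊤ := by
    refine (lt_of_le_of_lt (Finset.sum_le_sum fun n _ => measure_mono (Set.subset_univ (A n)))
      ?_).ne
    simp [measure_univ]
  have hstep1 : (μ (U ∩ S)).toReal ≤ ∑ n ∈ Finset.Icc 1 N, (μ (A n)).toReal := by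
    rw [← ENNReal.toReal_sum (fun n _ => measure_ne_top μ (A n))]
    exact ENNReal.toReal_mono hsum_ne hmeasle
  -- bound the sum
  have hgeom : ∑ n ∈ Finset.Ico r (N+1), θ ^ n ≤ θ ^ r / (1 - θ) := by
    rw [Finset.sum_Ico_eq_sum_range]
    calc ∑ i ∈ Finset.range (N + 1 - r), θ ^ (r + i)
        = θ ^ r * ∑ i ∈ Finset.range (N + 1 - r), θ ^ i := by
          rw [Finset.mul_sum]; exact Finset.sum_congr rfl fun i _ => pow_add θ r i
      _ ≤ θ ^ r * (1 - θ)⁻¹ :=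
          mul_le_mul_of_nonneg_left
            ((Summable.sum_le_tsum _ (fun i _ => pow_nonneg hθ0.le i)
              (summable_geometric_of_lt_one hθ0.le hθ1)).trans_eq
              (tsum_geometric_of_lt_one hθ0.le hθ1)) (pow_nonneg hθ0.le r)
      _ = θ ^ r / (1 - θ) := by rw [div_eq_mul_inv]
  have hsum2 : ∑ n ∈ Finset.Icc 1 N, (μ (A n)).toReal
      ≤ N * pU ^ 2 + 3 * C * mU * (θ ^ r / (1 - θ)) := by
    have hfilter : ∑ n ∈ Finset.Icc 1 N, (μ (A n)).toReal
        = ∑ n ∈ (Finset.Icc 1 N).filter (fun n => r ≤ n), (μ (A n)).toReal := by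
      refine (Finset.sum_subset (Finset.filter_subset _ _) ?_).symm
      intro n hn hn'
      have h1 : 1 ≤ n := (Finset.mem_Icc.1 hn).1
      have h2 : n < r := by
        by_contra h
        exact hn' (Finset.mem_filter.2 ⟨hn, by omega⟩)
      rw [hAzero n h1 h2]
      simp
    rw [hfilter]
    calc ∑ n ∈ (Finset.Icc 1 N).filter (fun n => r ≤ n), (μ (A n)).toReal
        ≤ ∑ n ∈ (Finset.Icc 1 N).filter (fun n => r ≤ n), (pU ^ 2 + 3 * C * mU * θ ^ n) :=
          Finset.sum_le_sum fun n hn =>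
            hAle n (Finset.mem_Icc.1 (Finset.mem_filter.1 hn).1).1
      _ = ((Finset.Icc 1 N).filter (fun n => r ≤ n)).card * pU ^ 2
          + 3 * C * mU * ∑ n ∈ (Finset.Icc 1 N).filter (fun n => r ≤ n), θ ^ n := by
          rw [Finset.sum_add_distrib, Finset.sum_const, nsmul_eq_mul, Finset.mul_sum]
      _ ≤ N * pU ^ 2 + 3 * C * mU * (θ ^ r / (1 - θ)) := by
          have hcard : (((Finset.Icc 1 N).filter (fun n => r ≤ n)).card : ℝ) ≤ (N : ℝ) := by
            have h := Finset.card_filter_le (Finset.Icc 1 N) (fun n => r ≤ n)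
            rw [Nat.card_Icc, Nat.add_sub_cancel] at h
            exact_mod_cast h
          have hsumθ : ∑ n ∈ (Finset.Icc 1 N).filter (fun n => r ≤ n), θ ^ n
              ≤ θ ^ r / (1 - θ) := by
            refine le_trans (Finset.sum_le_sum_of_subset_of_nonneg ?_
              (fun n _ _ => pow_nonneg hθ0.le n)) hgeom
            intro n hn
            obtain ⟨hn1, hn2⟩ := Finset.mem_filter.1 hn
            obtain ⟨ha, hb⟩ := Finset.mem_Icc.1 hn1
            exact Finset.mem_Ico.2 ⟨hn2, by omega⟩
          exact add_le_add (mul_le_mul_of_nonneg_right hcard (sq_nonneg pU))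
            (mul_le_mul_of_nonneg_left hsumθ (by positivity))
  -- conclude
  have hcond : (μ[|U] S).toReal = pU⁻¹ * (μ (U ∩ S)).toReal := by
    rw [cond_apply hUmeas, ENNReal.toReal_mul, ENNReal.toReal_inv]
  rw [hcond]
  calc pU⁻¹ * (μ (U ∩ S)).toReal
      ≤ pU⁻¹ * (N * pU ^ 2 + 3 * C * mU * (θ ^ r / (1 - θ))) := by
        exact mul_le_mul_of_nonneg_left (hstep1.trans hsum2) (inv_nonneg.2 hpU0.le)
    _ = 3 * C / (1 - θ) * (mU / pU) * θ ^ r + N * pU := by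
        have h1θ : (1:ℝ) - θ ≠ 0 := by linarith
        have hpne : pU ≠ 0 := hpU0.ne'
        field_simp
        ring
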